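/- Let s = (s₁,s₂,s₃) ∈ ℝ³ with s₁,s₂,s₃ > 0. Then the following are equivalent: (i) p_r(s) > 0 for all r = 1,2,3 and s₁,s₂,s₃ are not all equal; (ii) there exist a = (a₁,a₂,a₃) ∈ ℝ³ and b = (b₁,b₂,b₃) ∈ ℝ³ such that for all r = 1,2,3 (indices mod 3): the 2×2 symmetric matrix B_r(s,a,b) is positive definite, s_{r+1} + s_{r+2} - s_r + S(s)/(2s_r) + 3a_r > 0, and a_r < a_r⁰(s). (This is the matrix-level statement that a homogeneous metric g_s on the quaternionic flag manifold W¹² = Sp(3)/Sp(1)³ has strongly positive curvature if and only if it has sec > 0.) -/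

import Mathlib

open Matrix

/-- `S(s) = 2(s₁s₂+s₁s₃+s₂s₃) - (s₁²+s₂²+s₃²)`. -/
noncomputable def Spoly (s : Fin 3 → ℝ) : ℝ :=
  2 * (s 0 * s 1 + s 0 * s 2 + s 1 * s 2) - (s 0 ^ 2 + s 1 ^ 2 + s 2 ^ 2)

/-- `p_r(s) = (s_{r+1}-s_{r+2})² + 2 s_r (s_{r+1}+s_{r+2}) - 3 s_r²`, indices mod 3. -/
noncomputable def ppoly (s : Fin 3 → ℝ) (r : Fin 3) : ℝ :=
  (s (r + 1) - s (r + 2)) ^ 2 + 2 * s r * (s (r + 1) + s (r + 2)) - 3 * s r ^ 2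

/-- `a_r⁰(s) = ((s_{r+1}-s_{r+2})² - s_r²)/(2 s_r)`, indices mod 3. -/
noncomputable def a0 (s : Fin 3 → ℝ) (r : Fin 3) : ℝ :=
  ((s (r + 1) - s (r + 2)) ^ 2 - s r ^ 2) / (2 * s r)

/-- The `r`-th 2×2 block `B_r(s,a,b)` of the modified curvature operator of `(W¹², g_s)`. -/
noncomputable def Bmat (s a b : Fin 3 → ℝ) (r : Fin 3) : Matrix (Fin 2) (Fin 2) ℝ :=
  !![4 * s (r + 1) - b (r + 1),   -Spoly s / s r + 2 * a r;
     -Spoly s / s r + 2 * a r,    4 * s (r + 2) + b (r + 2)]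


lemma posDef_fin_two {A B C : ℝ} :
    (!![A, B; B, C] : Matrix (Fin 2) (Fin 2) ℝ).PosDef ↔ 0 < A ∧ 0 < C ∧ B ^ 2 < A * C := by
  have expand : ∀ u v : ℝ, star ![u, v] ⬝ᵥ ((!![A, B; B, C] : Matrix (Fin 2) (Fin 2) ℝ) *ᵥ ![u, v])
      = A*u^2 + 2*B*u*v + C*v^2 := by
    intro u v
    simp [Matrix.mulVec, dotProduct, Fin.sum_univ_two]
    ring
  rw [Matrix.posDef_iff_dotProduct_mulVec]
  constructor
  · rintro ⟨-, h⟩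
    have h1 := h (x := ![1, 0]) (by intro hc; have := congrFun hc 0; simp at this)
    have h2 := h (x := ![0, 1]) (by intro hc; have := congrFun hc 1; simp at this)
    rw [expand] at h1 h2
    have hA : 0 < A := by nlinarith
    have hC : 0 < C := by nlinarith
    refine ⟨hA, hC, ?_⟩
    have h3 := h (x := ![B, -A]) (by
      intro hc; have := congrFun hc 1; simp at this; exact hA.ne' this)
    rw [expand] at h3
    nlinarith
  · rintro ⟨hA, hC, hB⟩
    constructor
    · ext i j
      fin_cases i <;> fin_cases j <;> simp [Matrix.conjTranspose, Matrix.vecHead, Matrix.vecTail]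
    · intro x hx
      have hx2 : x = ![x 0, x 1] := by ext i; fin_cases i <;> simp
      rw [hx2, expand]
      set u := x 0; set v := x 1
      have hne : u ≠ 0 ∨ v ≠ 0 := by
        by_contra h; push_neg at h
        refine hx ?_
        ext i; fin_cases i
        · exact h.1
        · exact h.2
      rcases eq_or_ne v 0 with hv | hv
      · have hu : u ≠ 0 := by rcases hne with h | h; exact h; exact absurd hv h
        have : 0 < u^2 := by positivity
        rw [hv]; nlinarith
      · have hv2 : 0 < v^2 := by positivity
        nlinarith [sq_nonneg (A*u + B*v), mul_pos (sub_pos.mpr hB) hv2]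

/-- Core translation: given `c` strictly between `l` and `u`, produce `a`. -/
lemma core_a (x y z S c : ℝ) (hx : 0 < x)
    (hSdef : S = 2*(x*y+x*z+y*z)-(x^2+y^2+z^2))
    (h1 : c < (2*(y-z)^2 - 2*x*(y+z))/x)
    (h2 : -(2*(y+z-x))/3 - 4*S/(3*x) < c) :
    ∃ a : ℝ, -S/x + 2*a = c ∧ 0 < y+z-x+S/(2*x)+3*a ∧ a < ((y-z)^2-x^2)/(2*x) := by
  refine ⟨(c + S/x)/2, by field_simp; ring, ?_, ?_⟩
  · have key : y+z-x+S/(2*x)+3*((c + S/x)/2) = 3/2*(c - (-(2*(y+z-x))/3 - 4*S/(3*x))) := by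
      field_simp
      ring
    rw [key]
    linarith
  · have key : ((y-z)^2-x^2)/(2*x) = ((2*(y-z)^2 - 2*x*(y+z))/x + S/x)/2 := by
      rw [hSdef]; field_simp; ring
    rw [key]
    have key2 : (c + S/x)/2 < ((2*(y-z)^2 - 2*x*(y+z))/x + S/x)/2 := by linarith
    exact key2

lemma lemA (x y z S : ℝ) (hx : 0 < x) (hy : 0 < y) (hz : 0 < z)
    (hSdef : S = 2*(x*y+x*z+y*z)-(x^2+y^2+z^2)) (hS : 0 < S)
    (hp : 0 < (y-z)^2+2*x*(y+z)-3*x^2) (hyz : y ≠ z) :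
    ∃ a c : ℝ, -S/x + 2*a = c ∧ c^2 < 16*(y*z) ∧
      0 < y+z-x+S/(2*x)+3*a ∧ a < ((y-z)^2-x^2)/(2*x) := by
  have htri : x < y + z := by nlinarith [sq_nonneg (y - z), sq_nonneg (y + z)]
  obtain ⟨sy, hsyd⟩ : ∃ t, t = Real.sqrt y := ⟨_, rfl⟩
  obtain ⟨sz, hszd⟩ : ∃ t, t = Real.sqrt z := ⟨_, rfl⟩
  have hsy2 : sy^2 = y := by rw [hsyd]; exact Real.sq_sqrt hy.le
  have hsz2 : sz^2 = z := by rw [hszd]; exact Real.sq_sqrt hz.le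
  have hsyp : 0 < sy := by rw [hsyd]; exact Real.sqrt_pos.mpr hy
  have hszp : 0 < sz := by rw [hszd]; exact Real.sqrt_pos.mpr hz
  obtain ⟨M, hMd⟩ : ∃ t : ℝ, t = 4 * (sy * sz) := ⟨_, rfl⟩
  have hMpos : 0 < M := by rw [hMd]; positivity
  have hM2 : M^2 = 16*(y*z) := by rw [hMd, ← hsy2, ← hsz2]; ring
  obtain ⟨u, hud⟩ : ∃ t : ℝ, t = (2*(y-z)^2 - 2*x*(y+z))/x := ⟨_, rfl⟩
  obtain ⟨l, hld⟩ : ∃ t : ℝ, t = -(2*(y+z-x))/3 - 4*S/(3*x) := ⟨_, rfl⟩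
  have hl0 : l < 0 := by
    rw [hld]
    have : 0 < 4*S/(3*x) := by positivity
    linarith
  have hlu : l < u := by
    have key : u - l = 2*((y-z)^2+2*x*(y+z)-3*x^2)/(3*x) := by
      rw [hud, hld, hSdef]; field_simp; ring
    have hpos : 0 < 2*((y-z)^2+2*x*(y+z)-3*x^2)/(3*x) :=
      div_pos (by linarith) (by linarith)
    linarith
  have hMu : -M < u := by
    have hne : sy ≠ sz := fun h => hyz (by rw [← hsy2, ← hsz2, h])
    have h1 : 0 < (sy - sz)^2 :=
      (sq_nonneg _).lt_of_ne (Ne.symm (pow_ne_zero 2 (sub_ne_zero.mpr hne)))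
    have h2 : 0 < (sy + sz)^2 - x := by nlinarith [mul_pos hsyp hszp]
    have key : 2*(y-z)^2 - 2*x*(y+z) + M*x = 2*((sy-sz)^2*((sy+sz)^2-x)) := by
      rw [hMd, ← hsy2, ← hsz2]; ring
    have hpos : 0 < 2*(y-z)^2 - 2*x*(y+z) + M*x := by
      rw [key]; have := mul_pos h1 h2; linarith
    rw [hud, lt_div_iff₀ hx]
    linarith
  obtain ⟨c, hcd⟩ : ∃ t : ℝ, t = (max l (-M) + min u M)/2 := ⟨_, rfl⟩
  have hmaxmin : max l (-M) < min u M := by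
    apply max_lt <;> apply lt_min
    · exact hlu
    · linarith
    · exact hMu
    · linarith
  have hcl : l < c := by
    have := le_max_left l (-M); rw [hcd]; linarith
  have hcu : c < u := by
    have := min_le_left u M; rw [hcd]; linarith
  have hcM1 : -M < c := by
    have := le_max_right l (-M); rw [hcd]; linarith
  have hcM2 : c < M := by
    have := min_le_right u M; rw [hcd]; linarith
  obtain ⟨a, ha1, ha2, ha3⟩ := core_a x y z S c hx hSdef (by rw [← hud]; exact hcu) (by rw [← hld]; exact hcl)
  exact ⟨a, c, ha1, by rw [← hM2]; exact sq_lt_sq' hcM1 hcM2, ha2, ha3⟩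

lemma lemB (x t S β : ℝ) (hx : 0 < x) (ht : 0 < t) (hβ : 0 < β)
    (hSdef : S = 2*(x*t+x*t+t*t)-(x^2+t^2+t^2)) (hS : 0 < S)
    (hp : 0 < (t-t)^2+2*x*(t+t)-3*x^2) :
    ∃ a : ℝ, (-S/x + 2*a)^2 < (4*t+β)^2 ∧
      0 < t+t-x+S/(2*x)+3*a ∧ a < ((t-t)^2-x^2)/(2*x) := by
  obtain ⟨l, hld⟩ : ∃ w : ℝ, w = -(2*(t+t-x))/3 - 4*S/(3*x) := ⟨_, rfl⟩
  have hu : (2*(t-t)^2 - 2*x*(t+t))/x = -4*t := by field_simp; ring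
  have hlu : l < -4*t := by
    have key : -4*t - l = 2*((t-t)^2+2*x*(t+t)-3*x^2)/(3*x) := by
      rw [hld, hSdef]; field_simp; ring
    have hpos : 0 < 2*((t-t)^2+2*x*(t+t)-3*x^2)/(3*x) :=
      div_pos (by linarith) (by linarith)
    linarith
  obtain ⟨c, hcd⟩ : ∃ w : ℝ, w = (max l (-4*t-β) + (-4*t))/2 := ⟨_, rfl⟩
  have hmax : max l (-4*t-β) < -4*t := max_lt hlu (by linarith)
  have hcl : l < c := by have := le_max_left l (-4*t-β); rw [hcd]; linarith
  have hcu : c < -4*t := by rw [hcd]; linarith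
  have hcb : -4*t-β < c := by have := le_max_right l (-4*t-β); rw [hcd]; linarith
  obtain ⟨a, ha1, ha2, ha3⟩ := core_a x t t S c hx (by rw [hSdef]; try ring)
    (by rw [hu]; exact hcu) (by rw [← hld]; exact hcl)
  refine ⟨a, ?_, ha2, ha3⟩
  rw [ha1]
  have h1 : 0 < 4*t+β+c := by linarith
  have h2 : 0 < 4*t+β-c := by linarith
  nlinarith [mul_pos h1 h2]

/-- Backward direction: scalar conditions imply `p_r > 0`. -/
lemma lemBack (x y z S a : ℝ) (hx : 0 < x)
    (hSdef : S = 2*(x*y+x*z+y*z)-(x^2+y^2+z^2))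
    (h1 : a < ((y-z)^2-x^2)/(2*x))
    (h2 : 0 < y+z-x+S/(2*x)+3*a) :
    0 < (y-z)^2+2*x*(y+z)-3*x^2 := by
  have key : (y-z)^2+2*x*(y+z)-3*x^2
      = x*(y+z-x+S/(2*x)+3*(((y-z)^2-x^2)/(2*x))) := by
    rw [hSdef]; field_simp; ring
  rw [key]
  exact mul_pos hx (by linarith)

noncomputable def SP (x y z : ℝ) : ℝ :=
  2 * (x * y + x * z + y * z) - (x ^ 2 + y ^ 2 + z ^ 2)

/-- One scalar block of conditions. -/
def Blk (S X Y Z A B C : ℝ) : Prop :=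
  (0 < 4*Y - B ∧ 0 < 4*Z + C ∧ (-S/X + 2*A)^2 < (4*Y - B)*(4*Z + C)) ∧
    0 < Y + Z - X + S/(2*X) + 3*A ∧ A < ((Y - Z)^2 - X^2)/(2*X)

def RHS3 (x y z : ℝ) : Prop :=
  ∃ a0 a1 a2 b0 b1 b2 : ℝ,
    Blk (SP x y z) x y z a0 b1 b2 ∧ Blk (SP x y z) y z x a1 b2 b0 ∧
      Blk (SP x y z) z x y a2 b0 b1

lemma SP_cyc (x y z : ℝ) : SP y z x = SP x y z := by unfold SP; ring

lemma RHS3.cyc {x y z : ℝ} (h : RHS3 x y z) : RHS3 y z x := by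
  obtain ⟨a0, a1, a2, b0, b1, b2, h0, h1, h2⟩ := h
  refine ⟨a1, a2, a0, b1, b2, b0, ?_, ?_, ?_⟩ <;> rw [SP_cyc]
  exacts [h1, h2, h0]

lemma pairCase (x y : ℝ) (hx : 0 < x) (hy : 0 < y) (hxy : x ≠ y)
    (hp0 : 0 < (y-y)^2+2*x*(y+y)-3*x^2)
    (hp1 : 0 < (y-x)^2+2*y*(y+x)-3*y^2)
    (hp2 : 0 < (x-y)^2+2*y*(x+y)-3*y^2)
    (hS : 0 < SP x y y) : RHS3 x y y := by
  have hSdef0 : SP x y y = 2*(x*y+x*y+y*y)-(x^2+y^2+y^2) := by unfold SP; ring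
  have hSdef1 : SP x y y = 2*(y*y+y*x+y*x)-(y^2+y^2+x^2) := by unfold SP; ring
  have hSdef2 : SP x y y = 2*(y*x+y*y+x*y)-(y^2+x^2+y^2) := by unfold SP; ring
  obtain ⟨a1, c1, hoff1, hc1, hsc1, hb1'⟩ :=
    lemA y y x (SP x y y) hy hy hx hSdef1 hS hp1 (Ne.symm hxy)
  obtain ⟨a2, c2, hoff2, hc2, hsc2, hb2'⟩ :=
    lemA y x y (SP x y y) hy hx hy hSdef2 hS hp2 hxy
  obtain ⟨β, hβd⟩ : ∃ w : ℝ,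
      w = min (min ((16*(y*x) - c1^2)/(8*x)) ((16*(x*y) - c2^2)/(8*x))) (2*y) := ⟨_, rfl⟩
  have hβ : 0 < β := by
    rw [hβd]
    refine lt_min (lt_min ?_ ?_) (by linarith)
    · exact div_pos (by linarith) (by linarith)
    · exact div_pos (by linarith) (by linarith)
  have hβ1 : β ≤ (16*(y*x) - c1^2)/(8*x) := by
    rw [hβd]; exact le_trans (min_le_left _ _) (min_le_left _ _)
  have hβ2 : β ≤ (16*(x*y) - c2^2)/(8*x) := by
    rw [hβd]; exact le_trans (min_le_left _ _) (min_le_right _ _)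
  have hβy : β ≤ 2*y := by rw [hβd]; exact min_le_right _ _
  have h81 : β*(8*x) ≤ 16*(y*x) - c1^2 := (le_div_iff₀ (by positivity)).mp hβ1
  have h82 : β*(8*x) ≤ 16*(x*y) - c2^2 := (le_div_iff₀ (by positivity)).mp hβ2
  obtain ⟨a0, hq0, hsc0, hb0'⟩ := lemB x y (SP x y y) β hx hy hβ hSdef0 hS hp0
  refine ⟨a0, a1, a2, 0, -β, β, ⟨⟨by linarith, by linarith, ?_⟩, hsc0, hb0'⟩,
    ⟨⟨by linarith, by linarith, ?_⟩, hsc1, hb1'⟩,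
    ⟨⟨by linarith, by linarith, ?_⟩, hsc2, hb2'⟩⟩
  · have e : (4*y - -β)*(4*y + β) = (4*y+β)^2 := by ring
    linarith
  · rw [hoff1]
    nlinarith [mul_pos hx hβ]
  · rw [hoff2]
    nlinarith [mul_pos hx hβ]

lemma distinctCase (x y z : ℝ) (hx : 0 < x) (hy : 0 < y) (hz : 0 < z)
    (hyz : y ≠ z) (hzx : z ≠ x) (hxy : x ≠ y)
    (hp0 : 0 < (y-z)^2+2*x*(y+z)-3*x^2)
    (hp1 : 0 < (z-x)^2+2*y*(z+x)-3*y^2)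
    (hp2 : 0 < (x-y)^2+2*z*(x+y)-3*z^2)
    (hS : 0 < SP x y z) : RHS3 x y z := by
  obtain ⟨a0, c0, hoff0, hc0, hsc0, hb0'⟩ :=
    lemA x y z (SP x y z) hx hy hz (by unfold SP; try ring) hS hp0 hyz
  obtain ⟨a1, c1, hoff1, hc1, hsc1, hb1'⟩ :=
    lemA y z x (SP x y z) hy hz hx (by unfold SP; try ring) hS hp1 hzx
  obtain ⟨a2, c2, hoff2, hc2, hsc2, hb2'⟩ :=
    lemA z x y (SP x y z) hz hx hy (by unfold SP; try ring) hS hp2 hxy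
  refine ⟨a0, a1, a2, 0, 0, 0, ⟨⟨by linarith, by linarith, ?_⟩, hsc0, hb0'⟩,
    ⟨⟨by linarith, by linarith, ?_⟩, hsc1, hb1'⟩,
    ⟨⟨by linarith, by linarith, ?_⟩, hsc2, hb2'⟩⟩
  · rw [hoff0]
    have e : (4*y-0)*(4*z+0) = 16*(y*z) := by ring
    linarith
  · rw [hoff1]
    have e : (4*z-0)*(4*x+0) = 16*(z*x) := by ring
    linarith
  · rw [hoff2]
    have e : (4*x-0)*(4*y+0) = 16*(x*y) := by ring
    linarith

lemma allEqFalse (x a0 a1 a2 b0 b1 b2 : ℝ) (hx : 0 < x)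
    (ha0 : a0 < -(x/2)) (ha1 : a1 < -(x/2)) (ha2 : a2 < -(x/2))
    (d01 : 0 < 4*x - b1) (d02 : 0 < 4*x + b2)
    (q0 : (-(3*x) + 2*a0)^2 < (4*x-b1)*(4*x+b2))
    (d11 : 0 < 4*x - b2) (d12 : 0 < 4*x + b0)
    (q1 : (-(3*x) + 2*a1)^2 < (4*x-b2)*(4*x+b0))
    (d21 : 0 < 4*x - b0) (d22 : 0 < 4*x + b1)
    (q2 : (-(3*x) + 2*a2)^2 < (4*x-b0)*(4*x+b1)) : False := by
  have q0' : 16*x^2 < (4*x-b1)*(4*x+b2) := by nlinarith [q0]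
  have q1' : 16*x^2 < (4*x-b2)*(4*x+b0) := by nlinarith [q1]
  have q2' : 16*x^2 < (4*x-b0)*(4*x+b1) := by nlinarith [q2]
  have e1 : (0:ℝ) < 16*x^2 := by positivity
  have t01 : (16*x^2)*(16*x^2) < ((4*x-b1)*(4*x+b2))*((4*x-b2)*(4*x+b0)) :=
    mul_lt_mul'' q0' q1' e1.le e1.le
  have t012 : (16*x^2)*(16*x^2)*(16*x^2)
      < (((4*x-b1)*(4*x+b2))*((4*x-b2)*(4*x+b0)))*((4*x-b0)*(4*x+b1)) :=
    mul_lt_mul'' t01 q2' (mul_pos e1 e1).le e1.le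
  have m0 : (4*x-b0)*(4*x+b0) ≤ 16*x^2 := by nlinarith [sq_nonneg b0]
  have m1 : (4*x-b1)*(4*x+b1) ≤ 16*x^2 := by nlinarith [sq_nonneg b1]
  have m2 : (4*x-b2)*(4*x+b2) ≤ 16*x^2 := by nlinarith [sq_nonneg b2]
  have p1' : 0 < (4*x-b1)*(4*x+b1) := mul_pos d01 d22
  have p2' : 0 < (4*x-b2)*(4*x+b2) := mul_pos d11 d02
  have hle : (((4*x-b1)*(4*x+b2))*((4*x-b2)*(4*x+b0)))*((4*x-b0)*(4*x+b1))
      ≤ (16*x^2)*(16*x^2)*(16*x^2) :=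
    calc (((4*x-b1)*(4*x+b2))*((4*x-b2)*(4*x+b0)))*((4*x-b0)*(4*x+b1))
        = ((4*x-b0)*(4*x+b0))*(((4*x-b1)*(4*x+b1))*((4*x-b2)*(4*x+b2))) := by ring
      _ ≤ (16*x^2)*((16*x^2)*(16*x^2)) :=
          mul_le_mul m0 (mul_le_mul m1 m2 p2'.le e1.le) (mul_pos p1' p2').le e1.le
      _ = (16*x^2)*(16*x^2)*(16*x^2) := by ring
  linarith

lemma keyFwd (x y z : ℝ) (hx : 0 < x) (hy : 0 < y) (hz : 0 < z)
    (hp0 : 0 < (y-z)^2+2*x*(y+z)-3*x^2) (hp1 : 0 < (z-x)^2+2*y*(z+x)-3*y^2)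
    (hp2 : 0 < (x-y)^2+2*z*(x+y)-3*z^2) (hne : ¬(x = y ∧ y = z)) : RHS3 x y z := by
  have hS : 0 < SP x y z := by
    have e : SP x y z = ((y-z)^2+2*x*(y+z)-3*x^2) + ((z-x)^2+2*y*(z+x)-3*y^2)
        + ((x-y)^2+2*z*(x+y)-3*z^2) := by unfold SP; ring
    linarith
  by_cases hyz : y = z
  · subst hyz
    exact pairCase x y hx hy (fun h => hne ⟨h, rfl⟩) hp0 hp1 hp2 hS
  by_cases hzx : z = x
  · subst hzx
    have hS' : 0 < SP y z z := by
      have e : SP y z z = SP z y z := by unfold SP; ring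
      rw [e]; exact hS
    exact (pairCase y z hy hz hyz hp1 hp2 hp0 hS').cyc.cyc
  by_cases hxy : x = y
  · subst hxy
    have hS' : 0 < SP z x x := by
      have e : SP z x x = SP x x z := by unfold SP; ring
      rw [e]; exact hS
    exact (pairCase z x hz hx hzx hp2 hp0 hp1 hS').cyc
  · exact distinctCase x y z hx hy hz hyz hzx hxy hp0 hp1 hp2 hS

lemma keyBwd (x y z : ℝ) (hx : 0 < x) (hy : 0 < y) (hz : 0 < z) (h : RHS3 x y z) :
    (0 < (y-z)^2+2*x*(y+z)-3*x^2 ∧ 0 < (z-x)^2+2*y*(z+x)-3*y^2 ∧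
      0 < (x-y)^2+2*z*(x+y)-3*z^2) ∧ ¬(x = y ∧ y = z) := by
  obtain ⟨a0, a1, a2, b0, b1, b2, ⟨⟨d01, d02, q0⟩, sc0, ha0'⟩,
    ⟨⟨d11, d12, q1⟩, sc1, ha1'⟩, ⟨⟨d21, d22, q2⟩, sc2, ha2'⟩⟩ := h
  refine ⟨⟨lemBack x y z (SP x y z) a0 hx (by unfold SP; try ring) ha0' sc0,
          lemBack y z x (SP x y z) a1 hy (by unfold SP; try ring) ha1' sc1,
          lemBack z x y (SP x y z) a2 hz (by unfold SP; try ring) ha2' sc2⟩, ?_⟩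
  rintro ⟨rfl, rfl⟩
  have e : ((x-x)^2-x^2)/(2*x) = -(x/2) := by field_simp; ring
  rw [e] at ha0' ha1' ha2'
  have eo : -SP x x x/x = -(3*x) := by
    unfold SP; field_simp; ring
  rw [eo] at q0 q1 q2
  exact allEqFalse x a0 a1 a2 b0 b1 b2 hx ha0' ha1' ha2' d01 d02 q0 d11 d12 q1 d21 d22 q2

/-- Matrix-level statement: `g_s` on `W¹²` has strongly positive curvature iff it has
`sec > 0`, i.e. `p_r(s) > 0` for all `r` and the `s_r` are not all equal. -/
theorem stronglyPos_W12_iff (s : Fin 3 → ℝ) (hs : ∀ r, 0 < s r) :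
    ((∀ r, 0 < ppoly s r) ∧ ¬ (s 0 = s 1 ∧ s 1 = s 2)) ↔
      ∃ a b : Fin 3 → ℝ, ∀ r : Fin 3,
        (Bmat s a b r).PosDef ∧
        0 < s (r + 1) + s (r + 2) - s r + Spoly s / (2 * s r) + 3 * a r ∧
        a r < a0 s r := by
  have h0 := hs 0
  have h1 := hs 1
  have h2 := hs 2
  constructor
  · rintro ⟨hp, hne⟩
    have hp0 : 0 < (s 1 - s 2)^2+2*(s 0)*(s 1 + s 2)-3*(s 0)^2 := hp 0
    have hp1 : 0 < (s 2 - s 0)^2+2*(s 1)*(s 2 + s 0)-3*(s 1)^2 := hp 1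
    have hp2 : 0 < (s 0 - s 1)^2+2*(s 2)*(s 0 + s 1)-3*(s 2)^2 := hp 2
    obtain ⟨a0v, a1v, a2v, b0v, b1v, b2v, ⟨hm0, hsc0, hab0⟩, ⟨hm1, hsc1, hab1⟩,
      ⟨hm2, hsc2, hab2⟩⟩ := keyFwd (s 0) (s 1) (s 2) h0 h1 h2 hp0 hp1 hp2 hne
    refine ⟨![a0v, a1v, a2v], ![b0v, b1v, b2v], ?_⟩
    intro r
    fin_cases r
    · exact ⟨posDef_fin_two.mpr ⟨hm0.1, hm0.2.1, hm0.2.2⟩, hsc0, hab0⟩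
    · exact ⟨posDef_fin_two.mpr ⟨hm1.1, hm1.2.1, hm1.2.2⟩, hsc1, hab1⟩
    · exact ⟨posDef_fin_two.mpr ⟨hm2.1, hm2.2.1, hm2.2.2⟩, hsc2, hab2⟩
  · rintro ⟨a, b, h⟩
    obtain ⟨hpd0, hsc0, hab0⟩ := h 0
    obtain ⟨hpd1, hsc1, hab1⟩ := h 1
    obtain ⟨hpd2, hsc2, hab2⟩ := h 2
    rw [show Bmat s a b 0 = !![4*s 1 - b 1, -SP (s 0) (s 1) (s 2)/s 0 + 2*a 0;
        -SP (s 0) (s 1) (s 2)/s 0 + 2*a 0, 4*s 2 + b 2] from rfl, posDef_fin_two] at hpd0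
    rw [show Bmat s a b 1 = !![4*s 2 - b 2, -SP (s 0) (s 1) (s 2)/s 1 + 2*a 1;
        -SP (s 0) (s 1) (s 2)/s 1 + 2*a 1, 4*s 0 + b 0] from rfl, posDef_fin_two] at hpd1
    rw [show Bmat s a b 2 = !![4*s 0 - b 0, -SP (s 0) (s 1) (s 2)/s 2 + 2*a 2;
        -SP (s 0) (s 1) (s 2)/s 2 + 2*a 2, 4*s 1 + b 1] from rfl, posDef_fin_two] at hpd2
    have hr : RHS3 (s 0) (s 1) (s 2) :=
      ⟨a 0, a 1, a 2, b 0, b 1, b 2,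
        ⟨⟨hpd0.1, hpd0.2.1, hpd0.2.2⟩, hsc0, hab0⟩,
        ⟨⟨hpd1.1, hpd1.2.1, hpd1.2.2⟩, hsc1, hab1⟩,
        ⟨⟨hpd2.1, hpd2.2.1, hpd2.2.2⟩, hsc2, hab2⟩⟩
    obtain ⟨⟨hp0, hp1, hp2⟩, hne⟩ := keyBwd (s 0) (s 1) (s 2) h0 h1 h2 hr
    refine ⟨?_, hne⟩
    intro r
    fin_cases r
    · exact hp0
    · exact hp1
    · exact hp2
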